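/- Let V_n : Xⁿ ⇝ Y_n be a channel sequence, p̄_n optimal input distributions, and φ_n = −log₂ inf of the nonzero channel probabilities of V_n. For 0 ≤ δ_n ≤ 1 define the perturbed distribution p̂_n(x) = (1 − δ_n) p̄_n(x) + δ_n / |X|ⁿ. Then I(V_n, p̂_n) ≥ (1 − δ_n) I(V_n) − δ_n φ_n; in particular I(V_n) − I(V_n, p̂_n) ∈ O(δ_n (n + φ_n)). -/

import Mathlib

open Filter Asymptotics

/-- Output distribution `p•W`. -/
noncomputable def outDist {X Y : Type*} (W : X → Y → ℝ) (p : X → ℝ) (y : Y) : ℝ :=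
  ∑' x, p x * W x y

/-- Mutual information density `i(W,p,x,y)`. -/
noncomputable def iDen {X Y : Type*} (W : X → Y → ℝ) (p : X → ℝ) (x : X) (y : Y) : ℝ :=
  if W x y = 0 ∨ outDist W p y = 0 then 0
  else Real.logb 2 (W x y / outDist W p y)

/-- Mutual information `I(W,p)`. -/
noncomputable def MI {X Y : Type*} (W : X → Y → ℝ) (p : X → ℝ) : ℝ :=
  ∑' xy : X × Y, p xy.1 * W xy.1 xy.2 * iDen W p xy.1 xy.2

section helpers

variable {A B : Type*} [Fintype A] [Countable B]

lemma supp_finite (W : A → B → ℝ) (hW1 : ∀ x, HasSum (W x) 1) (φ : ℝ)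
    (hφ : ∀ x y, W x y ≠ 0 → (2:ℝ) ^ (-φ) ≤ W x y) (x : A) :
    {y : B | W x y ≠ 0}.Finite := by
  have hs : Summable (W x) := (hW1 x).summable
  have h0 : Tendsto (W x) cofinite (nhds 0) := hs.tendsto_cofinite_zero
  have hev : ∀ᶠ y in cofinite, W x y < (2:ℝ) ^ (-φ) :=
    h0.eventually_lt_const (by positivity)
  rw [Filter.eventually_cofinite] at hev
  refine hev.subset fun y hy => ?_
  simp only [Set.mem_setOf_eq] at hy ⊢
  exact not_lt.mpr (hφ x y hy)

lemma MI_eq_sum (W : A → B → ℝ) (T : Finset B) (hT : ∀ x y, y ∉ T → W x y = 0)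
    (r : A → ℝ) :
    MI W r = ∑ x, ∑ y ∈ T, r x * W x y * iDen W r x y := by
  rw [MI, tsum_eq_sum (s := Finset.univ ×ˢ T)
    (fun b hb => by
      have : b.2 ∉ T := by
        simp only [Finset.mem_product, Finset.mem_univ, true_and] at hb
        exact hb
      rw [hT b.1 b.2 this]; ring), Finset.sum_product]

lemma core {A B : Type*} [Fintype A] [Nonempty A] [Countable B]
    (W : A → B → ℝ) (hW0 : ∀ x y, 0 ≤ W x y) (hW1 : ∀ x, HasSum (W x) 1)
    (p : A → ℝ) (hp0 : ∀ x, 0 ≤ p x) (hp1 : ∑ x, p x = 1)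
    (φ : ℝ) (hφ0 : 0 ≤ φ) (hφ : ∀ x y, W x y ≠ 0 → (2:ℝ) ^ (-φ) ≤ W x y)
    (δ : ℝ) (hδ0 : 0 ≤ δ) (hδ1 : δ ≤ 1)
    (q : A → ℝ) (hq : ∀ x, q x = (1 - δ) * p x + δ / (Fintype.card A : ℝ)) :
    (1 - δ) * MI W p - δ * φ ≤ MI W q := by
  classical
  set c : ℝ := (Fintype.card A : ℝ) with hc
  have hcpos : 0 < c := by
    rw [hc]; exact_mod_cast Fintype.card_pos (α := A)
  have hl2 : 0 < Real.log 2 := Real.log_pos one_lt_two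
  have hTfin : (⋃ x : A, {y : B | W x y ≠ 0}).Finite :=
    Set.finite_iUnion (supp_finite W hW1 φ hφ)
  set T : Finset B := hTfin.toFinset with hTdef
  have hT : ∀ x y, y ∉ T → W x y = 0 := by
    intro x y hy
    by_contra h
    exact hy (hTfin.mem_toFinset.mpr (Set.mem_iUnion.mpr ⟨x, h⟩))
  have hrow : ∀ x, ∑ y ∈ T, W x y = 1 := by
    intro x
    have h1 := (hW1 x).tsum_eq
    rwa [tsum_eq_sum (fun y hy => hT x y hy)] at h1
  have hWle1 : ∀ x y, W x y ≤ 1 := by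
    intro x y
    by_cases hy : y ∈ T
    · calc W x y ≤ ∑ y ∈ T, W x y := Finset.single_le_sum (fun i _ => hW0 x i) hy
        _ = 1 := hrow x
    · rw [hT x y hy]; norm_num
  set Qp : B → ℝ := fun y => ∑ x, p x * W x y with hQpdef
  set Qq : B → ℝ := fun y => ∑ x, q x * W x y with hQqdef
  have houtp : outDist W p = Qp := funext fun y => tsum_fintype _
  have houtq : outDist W q = Qq := funext fun y => tsum_fintype _
  have hq0 : ∀ x, 0 ≤ q x := fun x => by
    rw [hq x]
    have := hp0 x
    have h1 : 0 ≤ δ / c := div_nonneg hδ0 hcpos.le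
    nlinarith
  have hq1 : ∑ x, q x = 1 := by
    simp only [hq]
    rw [Finset.sum_add_distrib, ← Finset.mul_sum, hp1, Finset.sum_const,
      Finset.card_univ, nsmul_eq_mul, ← hc, mul_div_cancel₀ _ (ne_of_gt hcpos)]
    ring
  have hQp0 : ∀ y, 0 ≤ Qp y := fun y =>
    Finset.sum_nonneg fun x _ => mul_nonneg (hp0 x) (hW0 x y)
  have hQq0 : ∀ y, 0 ≤ Qq y := fun y =>
    Finset.sum_nonneg fun x _ => mul_nonneg (hq0 x) (hW0 x y)
  have hQq1 : ∀ y, Qq y ≤ 1 := fun y => by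
    calc Qq y ≤ ∑ x, q x := Finset.sum_le_sum fun x _ => by
          nlinarith [hq0 x, hWle1 x y, hW0 x y]
      _ = 1 := hq1
  have hMIq := MI_eq_sum W T hT q
  have hMIp := MI_eq_sum W T hT p
  -- iDen lower bound for q
  have hiDenq : ∀ x y, W x y ≠ 0 → -φ ≤ iDen W q x y := by
    intro x y hW
    rw [iDen, houtq]
    by_cases h0 : Qq y = 0
    · rw [if_pos (Or.inr h0)]; linarith
    · rw [if_neg (by push_neg; exact ⟨hW, h0⟩)]
      have hWpos : 0 < W x y := lt_of_le_of_ne (hW0 x y) (Ne.symm hW)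
      have hQpos : 0 < Qq y := lt_of_le_of_ne (hQq0 y) (Ne.symm h0)
      have h1 : W x y ≤ W x y / Qq y := by
        rw [le_div_iff₀ hQpos]; nlinarith [hQq1 y]
      have h2 : (2:ℝ) ^ (-φ) ≤ W x y / Qq y := le_trans (hφ x y hW) h1
      calc -φ = Real.logb 2 ((2:ℝ) ^ (-φ)) :=
            (Real.logb_rpow (by norm_num) (by norm_num)).symm
        _ ≤ Real.logb 2 (W x y / Qq y) :=
            Real.logb_le_logb_of_le one_lt_two (by positivity) h2
  -- bound on uniform part
  have hSB : -φ ≤ ∑ x, ∑ y ∈ T, (1/c) * W x y * iDen W q x y := by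
    have key : ∀ x : A, ∀ y ∈ T, (1/c) * W x y * (-φ) ≤ (1/c) * W x y * iDen W q x y := by
      intro x y _
      by_cases hW : W x y = 0
      · simp [hW]
      · have h1 := hiDenq x y hW
        have h2 : 0 ≤ (1/c) * W x y := mul_nonneg (by positivity) (hW0 x y)
        nlinarith
    have heval : ∀ x : A, ∑ y ∈ T, (1/c) * W x y * (-φ) = (1/c) * (-φ) := by
      intro x
      have : ∀ y ∈ T, (1/c) * W x y * (-φ) = ((1/c) * (-φ)) * W x y := by
        intro y _; ring
      rw [Finset.sum_congr rfl this, ← Finset.mul_sum, hrow, mul_one]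
    calc -φ = ∑ _x : A, (1/c) * (-φ) := by
          rw [Finset.sum_const, Finset.card_univ, nsmul_eq_mul, ← hc]
          field_simp
      _ = ∑ x : A, ∑ y ∈ T, (1/c) * W x y * (-φ) := by
          exact Finset.sum_congr rfl fun x _ => (heval x).symm
      _ ≤ _ := Finset.sum_le_sum fun x _ => Finset.sum_le_sum (key x)
  -- bound on pbar part (when δ < 1)
  have hSA : δ < 1 → MI W p ≤ ∑ x, ∑ y ∈ T, p x * W x y * iDen W q x y := by
    intro hδlt
    have hQpT : ∑ y ∈ T, Qp y = 1 := by
      rw [hQpdef, Finset.sum_comm]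
      calc ∑ x : A, ∑ y ∈ T, p x * W x y = ∑ x : A, p x := by
            refine Finset.sum_congr rfl fun x _ => ?_
            rw [← Finset.mul_sum, hrow, mul_one]
        _ = 1 := hp1
    have hQqT : ∑ y ∈ T, Qq y = 1 := by
      rw [hQqdef, Finset.sum_comm]
      calc ∑ x : A, ∑ y ∈ T, q x * W x y = ∑ x : A, q x := by
            refine Finset.sum_congr rfl fun x _ => ?_
            rw [← Finset.mul_sum, hrow, mul_one]
        _ = 1 := hq1
    have key : ∀ y ∈ T, (Qp y - Qq y) / Real.log 2 ≤
        ∑ x, (p x * W x y * iDen W q x y - p x * W x y * iDen W p x y) := by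
      intro y _
      by_cases hQpy : Qp y = 0
      · have hzero : ∀ x : A, p x * W x y = 0 := by
          intro x
          have := (Finset.sum_eq_zero_iff_of_nonneg
            (fun x _ => mul_nonneg (hp0 x) (hW0 x y))).mp hQpy
          exact this x (Finset.mem_univ x)
        have hz : ∑ x, (p x * W x y * iDen W q x y - p x * W x y * iDen W p x y) = 0 :=
          Finset.sum_eq_zero fun x _ => by rw [hzero x]; ring
        rw [hz, hQpy]
        apply div_nonpos_of_nonpos_of_nonneg
        · linarith [hQq0 y]
        · linarith
      · have hQpp : 0 < Qp y := lt_of_le_of_ne (hQp0 y) (Ne.symm hQpy)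
        have hQqp : 0 < Qq y := by
          have h1 : (1 - δ) * Qp y ≤ Qq y := by
            rw [hQpdef, hQqdef]
            simp only
            rw [Finset.mul_sum]
            refine Finset.sum_le_sum fun x _ => ?_
            rw [hq x]
            have h2 : 0 ≤ δ / c := div_nonneg hδ0 hcpos.le
            nlinarith [hW0 x y]
          nlinarith
        have hterm : ∀ x : A, p x * W x y * iDen W q x y - p x * W x y * iDen W p x y
            = p x * W x y * Real.logb 2 (Qp y / Qq y) := by
          intro x
          by_cases hpw : p x * W x y = 0
          · rw [hpw]; ring
          · have hWne : W x y ≠ 0 := fun h => hpw (by rw [h]; ring)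
            simp only [iDen, houtp, houtq]
            rw [if_neg (by push_neg; exact ⟨hWne, ne_of_gt hQqp⟩),
              if_neg (by push_neg; exact ⟨hWne, ne_of_gt hQpp⟩)]
            rw [Real.logb, Real.logb, Real.logb,
              Real.log_div hWne (ne_of_gt hQqp), Real.log_div hWne (ne_of_gt hQpp),
              Real.log_div (ne_of_gt hQpp) (ne_of_gt hQqp)]
            ring
        rw [Finset.sum_congr rfl fun x _ => hterm x, ← Finset.sum_mul]
        have hsum : ∑ x, p x * W x y = Qp y := rfl
        rw [hsum]
        have hlog : Real.log (Qq y / Qp y) ≤ Qq y / Qp y - 1 :=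
          Real.log_le_sub_one_of_pos (by positivity)
        have hlogb : Real.logb 2 (Qp y / Qq y) = -Real.log (Qq y / Qp y) / Real.log 2 := by
          rw [Real.logb, ← Real.log_inv, inv_div]
        rw [hlogb]
        have hmd : Qp y * (-Real.log (Qq y / Qp y) / Real.log 2)
            = (Qp y * -Real.log (Qq y / Qp y)) / Real.log 2 := by ring
        rw [hmd]
        have hcan : Qq y / Qp y * Qp y = Qq y := div_mul_cancel₀ _ (ne_of_gt hQpp)
        have hnum : Qp y - Qq y ≤ Qp y * -Real.log (Qq y / Qp y) := by
          nlinarith [hlog, hQpp]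
        exact div_le_div_of_nonneg_right hnum hl2.le
    have hzsum : (0:ℝ) = ∑ y ∈ T, (Qp y - Qq y) / Real.log 2 := by
      rw [← Finset.sum_div, Finset.sum_sub_distrib, hQpT, hQqT]
      simp
    have hcomm : ∑ y ∈ T, ∑ x, (p x * W x y * iDen W q x y - p x * W x y * iDen W p x y)
        = (∑ x, ∑ y ∈ T, p x * W x y * iDen W q x y)
          - (∑ x, ∑ y ∈ T, p x * W x y * iDen W p x y) := by
      rw [Finset.sum_comm]
      rw [← Finset.sum_sub_distrib]
      exact Finset.sum_congr rfl fun x _ => by rw [Finset.sum_sub_distrib]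
    have hfin : (0:ℝ) ≤ (∑ x, ∑ y ∈ T, p x * W x y * iDen W q x y)
        - (∑ x, ∑ y ∈ T, p x * W x y * iDen W p x y) := by
      rw [← hcomm]
      calc (0:ℝ) = ∑ y ∈ T, (Qp y - Qq y) / Real.log 2 := hzsum
        _ ≤ _ := Finset.sum_le_sum key
    rw [hMIp]
    linarith
  -- assemble
  rw [hMIq]
  have hsplit : ∑ x, ∑ y ∈ T, q x * W x y * iDen W q x y
      = (1 - δ) * (∑ x, ∑ y ∈ T, p x * W x y * iDen W q x y)
        + δ * (∑ x, ∑ y ∈ T, (1/c) * W x y * iDen W q x y) := by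
    rw [Finset.mul_sum, Finset.mul_sum, ← Finset.sum_add_distrib]
    refine Finset.sum_congr rfl fun x _ => ?_
    rw [Finset.mul_sum, Finset.mul_sum, ← Finset.sum_add_distrib]
    refine Finset.sum_congr rfl fun y _ => ?_
    rw [hq x]
    ring
  rw [hsplit]
  rcases eq_or_lt_of_le hδ1 with h1 | h1
  · subst h1
    simp only [sub_self, zero_mul, one_mul, zero_add]
    linarith [hSB]
  · have h2 := hSA h1
    nlinarith [hSB, hSA h1]

lemma MI_le_core {A B : Type*} [Fintype A] [Nonempty A] [Countable B]
    (W : A → B → ℝ) (hW0 : ∀ x y, 0 ≤ W x y) (hW1 : ∀ x, HasSum (W x) 1)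
    (p : A → ℝ) (hp0 : ∀ x, 0 ≤ p x) (hp1 : ∑ x, p x = 1)
    (φ : ℝ) (hφ : ∀ x y, W x y ≠ 0 → (2:ℝ) ^ (-φ) ≤ W x y) :
    MI W p ≤ Real.logb 2 (Fintype.card A) := by
  classical
  set c : ℝ := (Fintype.card A : ℝ) with hc
  have hcpos : 0 < c := by
    rw [hc]; exact_mod_cast Fintype.card_pos (α := A)
  have hl2 : 0 < Real.log 2 := Real.log_pos one_lt_two
  have hTfin : (⋃ x : A, {y : B | W x y ≠ 0}).Finite :=
    Set.finite_iUnion (supp_finite W hW1 φ hφ)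
  set T : Finset B := hTfin.toFinset with hTdef
  have hT : ∀ x y, y ∉ T → W x y = 0 := by
    intro x y hy
    by_contra h
    exact hy (hTfin.mem_toFinset.mpr (Set.mem_iUnion.mpr ⟨x, h⟩))
  have hrow : ∀ x, ∑ y ∈ T, W x y = 1 := by
    intro x
    have h1 := (hW1 x).tsum_eq
    rwa [tsum_eq_sum (fun y hy => hT x y hy)] at h1
  set Qp : B → ℝ := fun y => ∑ x, p x * W x y with hQpdef
  have houtp : outDist W p = Qp := funext fun y => tsum_fintype _
  have hMIp := MI_eq_sum W T hT p
  -- termwise bound by the entropy summand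
  have step1 : ∀ x : A, ∀ y ∈ T, p x * W x y * iDen W p x y
      ≤ p x * W x y * Real.logb 2 (1 / p x) := by
    intro x y _
    by_cases hpw : p x * W x y = 0
    · rw [iDen, houtp]
      rcases mul_eq_zero.mp hpw with h | h
      · rw [h]; by_cases hW : W x y = 0 <;> simp [hW]
      · simp [h]
    · have hWne : W x y ≠ 0 := fun h => hpw (by rw [h]; ring)
      have hpne : p x ≠ 0 := fun h => hpw (by rw [h]; ring)
      have hWpos : 0 < W x y := lt_of_le_of_ne (hW0 x y) (Ne.symm hWne)
      have hppos : 0 < p x := lt_of_le_of_ne (hp0 x) (Ne.symm hpne)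
      have hQpos : 0 < Qp y := by
        have : p x * W x y ≤ Qp y :=
          Finset.single_le_sum (f := fun x => p x * W x y)
            (fun i _ => mul_nonneg (hp0 i) (hW0 i y)) (Finset.mem_univ x)
        nlinarith
      have hle : W x y / Qp y ≤ 1 / p x := by
        rw [div_le_div_iff₀ hQpos hppos]
        have : p x * W x y ≤ Qp y :=
          Finset.single_le_sum (f := fun x => p x * W x y)
            (fun i _ => mul_nonneg (hp0 i) (hW0 i y)) (Finset.mem_univ x)
        nlinarith
      have hiD : iDen W p x y ≤ Real.logb 2 (1 / p x) := by
        rw [iDen, houtp, if_neg (by push_neg; exact ⟨hWne, ne_of_gt hQpos⟩)]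
        exact Real.logb_le_logb_of_le one_lt_two (by positivity) hle
      have hnn : 0 ≤ p x * W x y := mul_nonneg (hp0 x) (hW0 x y)
      nlinarith
  have step2 : MI W p ≤ ∑ x, p x * Real.logb 2 (1 / p x) := by
    rw [hMIp]
    calc ∑ x, ∑ y ∈ T, p x * W x y * iDen W p x y
        ≤ ∑ x, ∑ y ∈ T, p x * W x y * Real.logb 2 (1 / p x) :=
          Finset.sum_le_sum fun x _ => Finset.sum_le_sum (step1 x)
      _ = ∑ x, p x * Real.logb 2 (1 / p x) := by
          refine Finset.sum_congr rfl fun x _ => ?_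
          have : ∀ y ∈ T, p x * W x y * Real.logb 2 (1 / p x)
              = (p x * Real.logb 2 (1 / p x)) * W x y := fun y _ => by ring
          rw [Finset.sum_congr rfl this, ← Finset.mul_sum, hrow, mul_one]
  have step3 : ∑ x, p x * Real.logb 2 (1 / p x) ≤ Real.logb 2 c := by
    have hrhs : Real.logb 2 c = ∑ x, p x * Real.logb 2 c := by
      rw [← Finset.sum_mul, hp1, one_mul]
    rw [hrhs, ← sub_nonpos, ← Finset.sum_sub_distrib]
    have key : ∀ x : A, p x * Real.logb 2 (1 / p x) - p x * Real.logb 2 c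
        ≤ (1 / c - p x) / Real.log 2 := by
      intro x
      by_cases hp : p x = 0
      · rw [hp]
        simp only [zero_mul, sub_zero, sub_zero]
        positivity
      · have hppos : 0 < p x := lt_of_le_of_ne (hp0 x) (Ne.symm hp)
        have hldiff : p x * Real.logb 2 (1 / p x) - p x * Real.logb 2 c
            = p x * Real.log (1 / (p x * c)) / Real.log 2 := by
          rw [Real.logb, Real.logb]
          rw [Real.log_div one_ne_zero hp, Real.log_div one_ne_zero
            (by positivity : p x * c ≠ 0), Real.log_mul hp (ne_of_gt hcpos)]
          ring
        rw [hldiff]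
        have hlog : Real.log (1 / (p x * c)) ≤ 1 / (p x * c) - 1 :=
          Real.log_le_sub_one_of_pos (by positivity)
        have hcan : p x * (1 / (p x * c)) = 1 / c := by field_simp
        have hnum : p x * Real.log (1 / (p x * c)) ≤ 1 / c - p x := by
          nlinarith
        exact div_le_div_of_nonneg_right hnum hl2.le
    calc ∑ x, (p x * Real.logb 2 (1 / p x) - p x * Real.logb 2 c)
        ≤ ∑ x, (1 / c - p x) / Real.log 2 := Finset.sum_le_sum fun x _ => key x
      _ = 0 := by
          rw [← Finset.sum_div, Finset.sum_sub_distrib, hp1, Finset.sum_const,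
            Finset.card_univ, nsmul_eq_mul, ← hc]
          field_simp
          ring
  exact le_trans step2 step3

end helpers

/-- Perturbation of an optimal input distribution: mixing the optimal distribution `p̄_n`
with the uniform distribution with weight `δ_n` costs at most
`I(V_n) − I(V_n, p̂_n) ≤ δ_n I(V_n) + δ_n φ_n`, where `2^{−φ_n}` lower-bounds the nonzero
channel probabilities; in particular the loss is `O(δ_n (n + φ_n))`. -/
theorem MI_perturbed_optimal_distribution
    {X : Type*} [Fintype X] {Y : ℕ → Type*} [∀ n, Countable (Y n)]
    (V : ∀ n, (Fin n → X) → Y n → ℝ)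
    (hV0 : ∀ n x y, 0 ≤ V n x y) (hV1 : ∀ n x, HasSum (V n x) 1)
    (pbar : ∀ n, (Fin n → X) → ℝ)
    (hpbar0 : ∀ n x, 0 ≤ pbar n x) (hpbar1 : ∀ n, ∑ x, pbar n x = 1)
    (hopt : ∀ n (q : (Fin n → X) → ℝ), (∀ x, 0 ≤ q x) → (∑ x, q x = 1) →
      MI (V n) q ≤ MI (V n) (pbar n))
    (φ : ℕ → ℝ) (hφ0 : ∀ n, 0 ≤ φ n)
    (hφ : ∀ n x y, V n x y ≠ 0 → (2 : ℝ) ^ (-(φ n)) ≤ V n x y)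
    (δ : ℕ → ℝ) (hδ : ∀ n, δ n ∈ Set.Icc (0 : ℝ) 1)
    (phat : ∀ n, (Fin n → X) → ℝ)
    (hphat : ∀ n x, phat n x = (1 - δ n) * pbar n x + δ n / (Fintype.card X : ℝ) ^ n) :
    (∀ n, (1 - δ n) * MI (V n) (pbar n) - δ n * φ n ≤ MI (V n) (phat n)) ∧
    (fun n => MI (V n) (pbar n) - MI (V n) (phat n)) =O[atTop]
      (fun n => δ n * ((n : ℝ) + φ n)) := by
  classical
  have hne : ∀ n, Nonempty (Fin n → X) := by
    intro n
    by_contra h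
    rw [not_nonempty_iff] at h
    have h1 := hpbar1 n
    rw [Finset.univ_eq_empty, Finset.sum_empty] at h1
    norm_num at h1
  have hcard : ∀ n, ((Fintype.card (Fin n → X) : ℝ)) = (Fintype.card X : ℝ) ^ n := by
    intro n
    rw [Fintype.card_fun, Fintype.card_fin]
    push_cast
    ring
  have part1 : ∀ n, (1 - δ n) * MI (V n) (pbar n) - δ n * φ n ≤ MI (V n) (phat n) := by
    intro n
    haveI := hne n
    refine core (V n) (hV0 n) (hV1 n) (pbar n) (hpbar0 n) (hpbar1 n) (φ n) (hφ0 n) (hφ n)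
      (δ n) (hδ n).1 (hδ n).2 (phat n) ?_
    intro x
    rw [hphat n x, hcard n]
  refine ⟨part1, ?_⟩
  haveI hXne : Nonempty X := ⟨Classical.choice (hne 1) 0⟩
  have hcX : (1:ℝ) ≤ (Fintype.card X : ℝ) := by
    exact_mod_cast Fintype.card_pos (α := X)
  set L : ℝ := Real.logb 2 (Fintype.card X) with hL
  have hL0 : 0 ≤ L := Real.logb_nonneg one_lt_two hcX
  have hcpow : ∀ n : ℕ, (0:ℝ) < (Fintype.card X : ℝ) ^ n := fun n => by positivity
  have hphat0 : ∀ n x, 0 ≤ phat n x := by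
    intro n x
    rw [hphat n x]
    have h1 := (hδ n).1
    have h2 := (hδ n).2
    have h3 := hpbar0 n x
    have h4 : 0 ≤ δ n / (Fintype.card X : ℝ) ^ n := div_nonneg h1 (hcpow n).le
    nlinarith
  have hphat1 : ∀ n, ∑ x, phat n x = 1 := by
    intro n
    have : ∀ x, phat n x = (1 - δ n) * pbar n x + δ n / (Fintype.card X : ℝ) ^ n :=
      hphat n
    rw [Finset.sum_congr rfl fun x _ => this x, Finset.sum_add_distrib,
      ← Finset.mul_sum, hpbar1, Finset.sum_const, Finset.card_univ, nsmul_eq_mul,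
      hcard n, mul_div_cancel₀ _ (ne_of_gt (hcpow n))]
    ring
  have hlb : ∀ n, 0 ≤ MI (V n) (pbar n) - MI (V n) (phat n) := by
    intro n
    have := hopt n (phat n) (hphat0 n) (hphat1 n)
    linarith
  have hub : ∀ n, MI (V n) (pbar n) - MI (V n) (phat n) ≤ δ n * ((n : ℝ) * L + φ n) := by
    intro n
    haveI := hne n
    have h1 := part1 n
    have hI := MI_le_core (V n) (hV0 n) (hV1 n) (pbar n) (hpbar0 n) (hpbar1 n)
      (φ n) (hφ n)
    rw [hcard n, Real.logb_pow] at hI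
    have h2 := (hδ n).1
    have h3 := hφ0 n
    nlinarith
  rw [isBigO_iff]
  refine ⟨max L 1, Filter.Eventually.of_forall fun n => ?_⟩
  have hg0 : 0 ≤ δ n * ((n:ℝ) + φ n) := by
    have := (hδ n).1
    have := hφ0 n
    have : (0:ℝ) ≤ (n:ℝ) := Nat.cast_nonneg n
    positivity
  rw [Real.norm_eq_abs, Real.norm_eq_abs, abs_of_nonneg (hlb n), abs_of_nonneg hg0]
  have hn0 : (0:ℝ) ≤ (n:ℝ) := Nat.cast_nonneg n
  have hML : L ≤ max L 1 := le_max_left L 1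
  have hM1 : (1:ℝ) ≤ max L 1 := le_max_right L 1
  have h2 := (hδ n).1
  have h3 := hφ0 n
  calc MI (V n) (pbar n) - MI (V n) (phat n) ≤ δ n * ((n : ℝ) * L + φ n) := hub n
    _ ≤ max L 1 * (δ n * ((n:ℝ) + φ n)) := by nlinarith [mul_nonneg h2 hn0, mul_nonneg h2 h3]
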